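/- arXiv:2410.17729 — 2 statements merged into one kernel-verified Lean document; each statement's English description precedes it below -/
import Mathlib

section
/- Let A : X → Y and A' : X' → Y be bounded linear operators between Hilbert spaces with a common target Y, and suppose range(A') ⊆ range(A). Then there exists a bounded linear operator S : X' → X with A' = A S. Conversely, if A' = A S for some bounded S, then range(A') ⊆ range(A). -/
/-- Douglas factorization, common target: For bounded `A : X → Y`,
`A' : X' → Y`, one has `range(A') ⊆ range(A)` iff there is a bounded `S : X' → X`
with `A' = A S`. -/
theorem stmt9 {X X' Y : Type*}
    [NormedAddCommGroup X] [InnerProductSpace ℝ X] [CompleteSpace X] [SecondCountableTopology X]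
    [NormedAddCommGroup X'] [InnerProductSpace ℝ X'] [CompleteSpace X'] [SecondCountableTopology X']
    [NormedAddCommGroup Y] [InnerProductSpace ℝ Y] [CompleteSpace Y] [SecondCountableTopology Y]
    (A : X →L[ℝ] Y) (A' : X' →L[ℝ] Y) :
    Set.range A' ⊆ Set.range A ↔ ∃ S : X' →L[ℝ] X, ∀ x, A' x = A (S x) := by
  constructor
  · intro h
    set K : Submodule ℝ X := LinearMap.ker (A : X →ₗ[ℝ] Y) with hK
    have hKc : IsClosed (K : Set X) := ContinuousLinearMap.isClosed_ker A
    haveI : CompleteSpace K := hKc.completeSpace_coe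
    haveI : CompleteSpace Kᗮ := K.isClosed_orthogonal.completeSpace_coe
    have hKK : Kᗮᗮ = K := K.orthogonal_orthogonal
    -- uniqueness
    have huniq : ∀ u v : X, u ∈ Kᗮ → v ∈ Kᗮ → A u = A v → u = v := by
      intro u v hu hv hA
      have h1 : u - v ∈ K := by
        simp only [hK, LinearMap.mem_ker]
        simp [map_sub, hA]
      have h2 : u - v ∈ Kᗮ := Kᗮ.sub_mem hu hv
      have := (Submodule.mem_inf.2 ⟨h1, h2⟩)
      rw [Submodule.inf_orthogonal_eq_bot K] at this
      exact sub_eq_zero.mp (by simpa using this)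
    -- the pointwise factorization map into Kᗮ
    set g : X' → X := fun x' =>
      (Submodule.orthogonalProjectionOnto Kᗮ (Classical.choose (h ⟨x', rfl⟩)) : X) with hg
    have hgmem : ∀ x', g x' ∈ Kᗮ := fun x' => (Submodule.orthogonalProjectionOnto Kᗮ _).2
    have hgA : ∀ x', A (g x') = A' x' := by
      intro x'
      have hch : A (Classical.choose (h ⟨x', rfl⟩)) = A' x' :=
        Classical.choose_spec (h ⟨x', rfl⟩)
      set y := Classical.choose (h ⟨x', rfl⟩)
      have hmem : y - (Submodule.orthogonalProjectionOnto Kᗮ y : X) ∈ K := by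
        have h2 := Submodule.sub_starProjection_mem_orthogonal (K := Kᗮ) y
        rwa [hKK] at h2
      have : A (y - (Submodule.orthogonalProjectionOnto Kᗮ y : X)) = 0 := hmem
      rw [map_sub, sub_eq_zero] at this
      rw [hg]
      simp only []
      rw [← this, hch]
    -- linearity
    have hadd : ∀ a b : X', g (a + b) = g a + g b := by
      intro a b
      refine huniq _ _ (hgmem _) (Kᗮ.add_mem (hgmem a) (hgmem b)) ?_
      rw [hgA, map_add, map_add, hgA, hgA]
    have hsmul : ∀ (c : ℝ) (a : X'), g (c • a) = c • g a := by
      intro c a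
      refine huniq _ _ (hgmem _) (Kᗮ.smul_mem c (hgmem a)) ?_
      rw [hgA, map_smul, map_smul, hgA]
    set gl : X' →ₗ[ℝ] X :=
      { toFun := g, map_add' := hadd, map_smul' := hsmul } with hgl
    -- closed graph
    have hgraph : IsClosed (gl.graph : Set (X' × X)) := by
      have : (gl.graph : Set (X' × X)) =
          {p : X' × X | p.2 ∈ Kᗮ} ∩ {p : X' × X | A p.2 = A' p.1} := by
        ext ⟨a, b⟩
        simp only [Set.mem_inter_iff, Set.mem_setOf_eq, SetLike.mem_coe,
          LinearMap.mem_graph_iff]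
        constructor
        · rintro rfl
          exact ⟨hgmem a, hgA a⟩
        · rintro ⟨hb, hab⟩
          exact (huniq _ _ hb (hgmem a) (by rw [hab, hgA])).symm ▸ rfl
      rw [this]
      exact (IsClosed.preimage (continuous_snd) K.isClosed_orthogonal).inter
        (isClosed_eq (A.continuous.comp continuous_snd)
          (A'.continuous.comp continuous_fst))
    exact ⟨ContinuousLinearMap.ofIsClosedGraph hgraph, fun x => by
      rw [ContinuousLinearMap.coeFn_ofIsClosedGraph]
      exact (hgA x).symm⟩
  · rintro ⟨S, hS⟩ y ⟨x, rfl⟩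
    exact ⟨S x, (hS x).symm⟩
end

section
/- Let A : X → Y and A' : X' → Y be bounded linear operators into a common Hilbert space Y. Then range(A') ⊆ range(A) if and only if there exists a constant C ≥ 0 such that ‖(A')* y‖ ≤ C ‖A* y‖ for all y ∈ Y. -/
open ContinuousLinearMap RealInnerProductSpace

set_option maxHeartbeats 1000000 in
/-- Douglas majorization: For bounded `A : X → Y`, `A' : X' → Y`,
`range(A') ⊆ range(A)` iff there is `C ≥ 0` with `‖(A')* y‖ ≤ C ‖A* y‖` for all `y`. -/
theorem stmt10 {X X' Y : Type*}
    [NormedAddCommGroup X] [InnerProductSpace ℝ X] [CompleteSpace X] [SecondCountableTopology X]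
    [NormedAddCommGroup X'] [InnerProductSpace ℝ X'] [CompleteSpace X'] [SecondCountableTopology X']
    [NormedAddCommGroup Y] [InnerProductSpace ℝ Y] [CompleteSpace Y] [SecondCountableTopology Y]
    (A : X →L[ℝ] Y) (A' : X' →L[ℝ] Y) :
    Set.range A' ⊆ Set.range A ↔
      ∃ C : ℝ, 0 ≤ C ∧ ∀ y : Y,
        ‖ContinuousLinearMap.adjoint A' y‖ ≤ C * ‖ContinuousLinearMap.adjoint A y‖ := by
  constructor
  · -- (⇒) : range inclusion gives a factorization `A ∘ B = A'` by the closed graph theorem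
    intro h
    set K : Submodule ℝ X := LinearMap.ker (A : X →ₗ[ℝ] Y) with hK
    haveI : CompleteSpace K := (ContinuousLinearMap.isClosed_ker A).completeSpace_coe
    have hKK : Kᗮᗮ = K := Submodule.orthogonal_orthogonal K
    set P : X →L[ℝ] Kᗮ := Submodule.orthogonalProjectionOnto Kᗮ with hP
    -- a choice of preimages
    have hpre : ∀ x' : X', ∃ x : X, A x = A' x' := fun x' => h (Set.mem_range_self x')
    let f : X' → X := fun x' => (hpre x').choose
    have hf : ∀ x', A (f x') = A' x' := fun x' => (hpre x').choose_spec
    -- projection kills the kernel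
    have key0 : ∀ x : X, A x = 0 → P x = 0 := by
      intro x hx
      have hxK : x ∈ Kᗮᗮ := hKK.symm ▸ (LinearMap.mem_ker.mpr hx)
      exact Submodule.orthogonalProjectionOnto_apply_of_mem_orthogonal hxK
    have keyEq : ∀ x₁ x₂ : X, A x₁ = A x₂ → P x₁ = P x₂ := by
      intro x₁ x₂ hx
      have : P (x₁ - x₂) = 0 := key0 _ (by simp [hx])
      have := sub_eq_zero.mp (by rwa [map_sub] at this)
      exact this
    -- A (P x) = A x
    have hAP : ∀ x : X, A (P x : X) = A x := by
      intro x
      have h1 : x - (P x : X) ∈ Kᗮᗮ := Submodule.sub_starProjection_mem_orthogonal x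
      rw [hKK] at h1
      have h2 : A (x - (P x : X)) = 0 := h1
      rw [map_sub, sub_eq_zero] at h2
      exact h2.symm
    -- the linear factorization map
    let Blin : X' →ₗ[ℝ] X :=
      { toFun := fun x' => (P (f x') : X)
        map_add' := by
          intro a b
          have : P (f (a + b)) = P (f a + f b) := keyEq _ _ (by simp [hf])
          simp [this]
        map_smul' := by
          intro c a
          have : P (f (c • a)) = P (c • f a) := keyEq _ _ (by simp [hf])
          simp [this] }
    have hBval : ∀ x', Blin x' = (P (f x') : X) := fun _ => rfl
    have hABlin : ∀ x', A (Blin x') = A' x' := by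
      intro x'; rw [hBval, hAP, hf]
    have hBmem : ∀ x', Blin x' ∈ Kᗮ := fun x' => (P (f x')).2
    -- continuity via the closed graph theorem
    have hcont : Continuous Blin := by
      apply Blin.continuous_of_seq_closed_graph
      intro u x y hu hBu
      have hymem : y ∈ Kᗮ :=
        (Submodule.isClosed_orthogonal K).mem_of_tendsto hBu
          (Filter.Eventually.of_forall fun n => hBmem (u n))
      have hAy : A y = A' x := by
        have h1 : Filter.Tendsto (fun n => A (Blin (u n))) Filter.atTop (nhds (A y)) :=
          (A.continuous.tendsto _).comp hBu
        have h2 : (fun n => A (Blin (u n))) = fun n => A' (u n) := by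
          funext n; exact hABlin (u n)
        rw [h2] at h1
        have h3 : Filter.Tendsto (fun n => A' (u n)) Filter.atTop (nhds (A' x)) :=
          (A'.continuous.tendsto _).comp hu
        exact tendsto_nhds_unique h1 h3
      -- y and Blin x are both in Kᗮ with the same image under A
      have hdiff : y - Blin x ∈ K := by
        rw [hK, LinearMap.mem_ker, map_sub, ContinuousLinearMap.coe_coe, hAy, hABlin, sub_self]
      have hdiff' : y - Blin x ∈ Kᗮ := Submodule.sub_mem _ hymem (hBmem x)
      have : y - Blin x = 0 := by
        have h0 : ⟪y - Blin x, y - Blin x⟫ = 0 := (Submodule.mem_orthogonal _ _).mp hdiff' _ hdiff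
        exact inner_self_eq_zero.mp h0
      have := sub_eq_zero.mp this
      exact this
    let B : X' →L[ℝ] X := ⟨Blin, hcont⟩
    have hfact : A.comp B = A' := by
      ext x'; exact hABlin x'
    refine ⟨‖ContinuousLinearMap.adjoint B‖, norm_nonneg _, fun y => ?_⟩
    have : ContinuousLinearMap.adjoint A' =
        (ContinuousLinearMap.adjoint B).comp (ContinuousLinearMap.adjoint A) := by
      rw [← hfact, ContinuousLinearMap.adjoint_comp]
    rw [this]
    exact (ContinuousLinearMap.adjoint B).le_opNorm _
  · -- (⇐) : majorization gives range inclusion, via Hahn–Banach + Riesz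
    rintro ⟨C, hC, hmaj⟩ z ⟨x', rfl⟩
    -- adjoint kernels relation
    have hker : ∀ y₁ y₂ : Y, ContinuousLinearMap.adjoint A y₁ = ContinuousLinearMap.adjoint A y₂ →
        ContinuousLinearMap.adjoint A' y₁ = ContinuousLinearMap.adjoint A' y₂ := by
      intro y₁ y₂ hy
      have h1 : ‖ContinuousLinearMap.adjoint A' (y₁ - y₂)‖ ≤
          C * ‖ContinuousLinearMap.adjoint A (y₁ - y₂)‖ := hmaj _
      rw [map_sub, map_sub, hy, sub_self, norm_zero, mul_zero] at h1
      have h2 : ContinuousLinearMap.adjoint A' y₁ - ContinuousLinearMap.adjoint A' y₂ = 0 :=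
        norm_le_zero_iff.mp h1
      exact sub_eq_zero.mp h2
    set p : Submodule ℝ X := LinearMap.range ((ContinuousLinearMap.adjoint A : Y →L[ℝ] X) :
      Y →ₗ[ℝ] X) with hp
    -- choice of preimages in p
    have hch : ∀ v : p, ∃ y : Y, ContinuousLinearMap.adjoint A y = (v : X) := fun v => v.2
    let g : p → Y := fun v => (hch v).choose
    have hg : ∀ v : p, ContinuousLinearMap.adjoint A (g v) = (v : X) := fun v => (hch v).choose_spec
    -- the value function
    let val : p → ℝ := fun v => ⟪ContinuousLinearMap.adjoint A' (g v), x'⟫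
    have hval : ∀ (y : Y) (v : p), ContinuousLinearMap.adjoint A y = (v : X) →
        val v = ⟪ContinuousLinearMap.adjoint A' y, x'⟫ := by
      intro y v hy
      have : ContinuousLinearMap.adjoint A' (g v) = ContinuousLinearMap.adjoint A' y :=
        hker _ _ (by rw [hg v, hy])
      simp only [val, this]
    let ψlin : p →ₗ[ℝ] ℝ :=
      { toFun := val
        map_add' := by
          intro v w
          have h1 : val (v + w) = ⟪ContinuousLinearMap.adjoint A' (g v + g w), x'⟫ :=
            hval _ _ (by rw [map_add, hg, hg]; rfl)
          rw [h1, map_add, inner_add_left]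
        map_smul' := by
          intro c v
          have h1 : val (c • v) = ⟪ContinuousLinearMap.adjoint A' (c • g v), x'⟫ :=
            hval _ _ (by rw [map_smul, hg]; rfl)
          show val (c • v) = c • val v
          rw [h1, map_smul, real_inner_smul_left]
          rfl }
    have hbound : ∀ v : p, ‖ψlin v‖ ≤ (C * ‖x'‖) * ‖v‖ := by
      intro v
      have h1 : ψlin v = ⟪ContinuousLinearMap.adjoint A' (g v), x'⟫ := rfl
      rw [h1]
      calc ‖⟪ContinuousLinearMap.adjoint A' (g v), x'⟫‖
          ≤ ‖ContinuousLinearMap.adjoint A' (g v)‖ * ‖x'‖ := norm_inner_le_norm _ _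
        _ ≤ (C * ‖ContinuousLinearMap.adjoint A (g v)‖) * ‖x'‖ :=
            mul_le_mul_of_nonneg_right (hmaj _) (norm_nonneg _)
        _ = (C * ‖x'‖) * ‖v‖ := by
            have h2 : ‖ContinuousLinearMap.adjoint A (g v)‖ = ‖v‖ := by
              rw [hg v, Submodule.norm_coe]
            rw [h2]; ring
    let ψ : p →L[ℝ] ℝ := ψlin.mkContinuous (C * ‖x'‖) hbound
    obtain ⟨F, hF, -⟩ := exists_extension_norm_eq p ψ
    set x : X := (InnerProductSpace.toDual ℝ X).symm F with hx
    have hxF : ∀ u : X, ⟪x, u⟫ = F u := fun u => InnerProductSpace.toDual_symm_apply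
    refine ⟨x, ?_⟩
    refine ext_inner_left ℝ fun y => ?_
    have hv : ContinuousLinearMap.adjoint A y ∈ p := LinearMap.mem_range_self _ y
    calc ⟪y, A x⟫ = ⟪ContinuousLinearMap.adjoint A y, x⟫ :=
          (ContinuousLinearMap.adjoint_inner_left A x y).symm
      _ = ⟪x, ContinuousLinearMap.adjoint A y⟫ := real_inner_comm _ _
      _ = F (ContinuousLinearMap.adjoint A y) := hxF _
      _ = ψ ⟨ContinuousLinearMap.adjoint A y, hv⟩ := hF ⟨ContinuousLinearMap.adjoint A y, hv⟩
      _ = ⟪ContinuousLinearMap.adjoint A' y, x'⟫ := hval y ⟨_, hv⟩ rfl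
      _ = ⟪y, A' x'⟫ := ContinuousLinearMap.adjoint_inner_left A' x' y
end
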